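/- arXiv:2507.00035 — 2 statements merged into one kernel-verified Lean document; each statement's English description precedes it below -/
import Mathlib

section
/- Let T and f be self-maps of a complete metric space (X,d) with T(X) ⊆ f(X), and suppose there is r ∈ [0,1) such that for all x, y ∈ X, d(Tx,Ty) ≤ r·max{ d(fx,fy), d(Tx,fx), d(Ty,fy), (1/2)[d(Tx,fy) + d(Ty,fx)] }. If either (a) the pair (T,f) is compatible and at least one of T, f is continuous, or (b) the pair (T,f) is compatible and reciprocally continuous, then F(T) ∩ F(f) is a singleton. -/
/-- Two self-maps `T` and `f` of a metric space are *compatible* if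
`d(f(T xₙ), T(f xₙ)) → 0` whenever `f xₙ → t` and `T xₙ → t` for some `t`. -/
def CompatiblePair {X : Type*} [MetricSpace X] (T f : X → X) : Prop :=
  ∀ (x : ℕ → X) (t : X),
    Filter.Tendsto (fun n => f (x n)) Filter.atTop (nhds t) →
    Filter.Tendsto (fun n => T (x n)) Filter.atTop (nhds t) →
    Filter.Tendsto (fun n => dist (f (T (x n))) (T (f (x n)))) Filter.atTop (nhds 0)

/-- Two self-maps `T` and `f` of a metric space are *reciprocally continuous* if
`f (T xₙ) → f t` and `T (f xₙ) → T t` whenever `f xₙ → t` and `T xₙ → t`. -/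
def ReciprocallyContinuous {X : Type*} [MetricSpace X] (T f : X → X) : Prop :=
  ∀ (x : ℕ → X) (t : X),
    Filter.Tendsto (fun n => f (x n)) Filter.atTop (nhds t) →
    Filter.Tendsto (fun n => T (x n)) Filter.atTop (nhds t) →
    Filter.Tendsto (fun n => f (T (x n))) Filter.atTop (nhds (f t)) ∧
    Filter.Tendsto (fun n => T (f (x n))) Filter.atTop (nhds (T t))


open Filter

private lemma quash {r a m : ℝ} (hr0 : 0 ≤ r) (hr1 : r < 1) (ha : 0 ≤ a)
    (h : a ≤ r * m) (hm : m ≤ a) : a = 0 := by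
  nlinarith [mul_le_mul_of_nonneg_left hm hr0]

private lemma fixA {X : Type*} [MetricSpace X] {r : ℝ} (hr0 : 0 ≤ r) (hr1 : r < 1) {p q : X}
    (h : dist p q ≤ r * max (max (dist p q) (dist p p))
        (max (dist q q) ((dist p q + dist q p) / 2))) : p = q := by
  simp only [dist_self] at h
  rw [dist_comm q p] at h
  refine dist_eq_zero.mp (quash hr0 hr1 dist_nonneg h ?_)
  apply max_le (max_le le_rfl dist_nonneg)
  exact max_le dist_nonneg (by linarith)

private lemma fixB {X : Type*} [MetricSpace X] {r : ℝ} (hr0 : 0 ≤ r) (hr1 : r < 1) {p q : X}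
    (h : dist p q ≤ r * max (max (dist p p) (dist p p))
        (max (dist q p) ((dist p p + dist q p) / 2))) : p = q := by
  simp only [dist_self] at h
  rw [dist_comm q p] at h
  refine dist_eq_zero.mp (quash hr0 hr1 dist_nonneg h ?_)
  apply max_le (by simp [dist_nonneg])
  exact max_le le_rfl (by linarith [dist_nonneg (x := p) (y := q)])

private lemma key_limit {X : Type*} [MetricSpace X] {T f : X → X} {r : ℝ}
    (hcontr : ∀ x y, dist (T x) (T y) ≤ r * max (max (dist (f x) (f y)) (dist (T x) (f x)))
        (max (dist (T y) (f y)) ((dist (T x) (f y) + dist (T y) (f x)) / 2)))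
    {u v : ℕ → X} {A B C D : X}
    (hTu : Tendsto (fun n => T (u n)) atTop (nhds A))
    (hfu : Tendsto (fun n => f (u n)) atTop (nhds B))
    (hTv : Tendsto (fun n => T (v n)) atTop (nhds C))
    (hfv : Tendsto (fun n => f (v n)) atTop (nhds D)) :
    dist A C ≤ r * max (max (dist B D) (dist A B))
        (max (dist C D) ((dist A D + dist C B) / 2)) := by
  refine le_of_tendsto_of_tendsto' (hTu.dist hTv) ?_ (fun n => hcontr (u n) (v n))
  exact (((hfu.dist hfv).max (hTu.dist hfu)).max
    ((hTv.dist hfv).max (((hTu.dist hfv).add (hTv.dist hfu)).div_const 2))).const_mul r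

private lemma approx_tendsto {X : Type*} [MetricSpace X] {u v : ℕ → X} {a : X}
    (hu : Tendsto u atTop (nhds a))
    (h : Tendsto (fun n => dist (u n) (v n)) atTop (nhds 0)) :
    Tendsto v atTop (nhds a) := by
  rw [tendsto_iff_dist_tendsto_zero]
  have hsum : Tendsto (fun n => dist (u n) (v n) + dist (u n) a) atTop (nhds 0) := by
    simpa using h.add (tendsto_iff_dist_tendsto_zero.mp hu)
  refine squeeze_zero (fun n => dist_nonneg) (fun n => ?_) hsum
  calc dist (v n) a ≤ dist (v n) (u n) + dist (u n) a := dist_triangle _ _ _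
    _ = dist (u n) (v n) + dist (u n) a := by rw [dist_comm]

private lemma step_bound {X : Type*} [MetricSpace X] {r : ℝ} (hr0 : 0 ≤ r) (hr1 : r < 1)
    {p q s : X}
    (h : dist s q ≤ r * max (max (dist q p) (dist s q))
        (max (dist q p) ((dist s p + dist q q) / 2))) :
    dist q s ≤ r * dist p q := by
  rw [dist_self] at h
  have htri : dist s p ≤ dist s q + dist q p := dist_triangle s q p
  rcases le_total (dist s q) (dist q p) with hle | hle
  · calc dist q s = dist s q := dist_comm q s
      _ ≤ r * max (max (dist q p) (dist s q)) (max (dist q p) ((dist s p + 0) / 2)) := h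
      _ ≤ r * dist q p := by
          refine mul_le_mul_of_nonneg_left ?_ hr0
          exact max_le (max_le le_rfl hle) (max_le le_rfl (by linarith))
      _ = r * dist p q := by rw [dist_comm]
  · have hr : dist s q ≤ r * dist s q := by
      refine le_trans h (mul_le_mul_of_nonneg_left ?_ hr0)
      exact max_le (max_le hle le_rfl) (max_le hle (by linarith))
    have h0 : dist s q = 0 := by nlinarith [dist_nonneg (x := s) (y := q)]
    rw [dist_comm q s, h0]
    positivity

/-- Babu et al., Theorem 3.1: for self-maps `T`, `f` of a complete metric space with
`T(X) ⊆ f(X)` and the quasi-contraction condition, if the pair `(T,f)` is compatible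
and either `T` or `f` is continuous, or the pair is compatible and reciprocally
continuous, then `F(T) ∩ F(f)` is a singleton. -/
theorem babu_theorem_31
    {X : Type*} [MetricSpace X] [CompleteSpace X] [Nonempty X]
    (T f : X → X)
    (hsub : Set.range T ⊆ Set.range f)
    (r : ℝ) (hr0 : 0 ≤ r) (hr1 : r < 1)
    (hcontr : ∀ x y,
      dist (T x) (T y) ≤ r * max (max (dist (f x) (f y)) (dist (T x) (f x)))
        (max (dist (T y) (f y)) ((dist (T x) (f y) + dist (T y) (f x)) / 2)))
    (hyp : (CompatiblePair T f ∧ (Continuous T ∨ Continuous f)) ∨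
           (CompatiblePair T f ∧ ReciprocallyContinuous T f)) :
    ∃! z, T z = z ∧ f z = z := by
  classical
  -- uniqueness
  have uniq : ∀ z w, (T z = z ∧ f z = z) → (T w = w ∧ f w = w) → z = w := by
    rintro z w ⟨hTz, hfz⟩ ⟨hTw, hfw⟩
    have h := hcontr z w
    rw [hTz, hTw, hfz, hfw] at h
    exact fixA hr0 hr1 h
  suffices hex : ∃ z, T z = z ∧ f z = z by
    obtain ⟨z, hz⟩ := hex
    exact ⟨z, hz, fun w hw => uniq w z hw hz⟩
  -- construct the iteration sequence
  have hch : ∀ x : X, ∃ y, f y = T x := fun x => hsub ⟨x, rfl⟩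
  choose c hc using hch
  obtain ⟨x0⟩ : Nonempty X := inferInstance
  set xs : ℕ → X := fun n => c^[n] x0 with hxs
  have hstep : ∀ n, f (xs (n + 1)) = T (xs n) := by
    intro n
    simp only [hxs, Function.iterate_succ_apply']
    exact hc _
  -- contraction along the sequence
  have hcontrseq : ∀ n, dist (T (xs (n + 1))) (T (xs (n + 2)))
      ≤ r * dist (T (xs n)) (T (xs (n + 1))) := by
    intro n
    have h := hcontr (xs (n + 2)) (xs (n + 1))
    rw [hstep (n + 1), hstep n] at h
    exact step_bound hr0 hr1 h
  have hgeo : ∀ n, dist (T (xs n)) (T (xs (n + 1)))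
      ≤ dist (T (xs 0)) (T (xs 1)) * r ^ n := by
    intro n
    induction n with
    | zero => simp
    | succ k ih =>
        calc dist (T (xs (k + 1))) (T (xs (k + 2)))
            ≤ r * dist (T (xs k)) (T (xs (k + 1))) := hcontrseq k
          _ ≤ r * (dist (T (xs 0)) (T (xs 1)) * r ^ k) :=
              mul_le_mul_of_nonneg_left ih hr0
          _ = dist (T (xs 0)) (T (xs 1)) * r ^ (k + 1) := by ring
  have hcauchy : CauchySeq (fun n => T (xs n)) :=
    cauchySeq_of_le_geometric r (dist (T (xs 0)) (T (xs 1))) hr1 hgeo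
  obtain ⟨t, hT⟩ := cauchySeq_tendsto_of_complete hcauchy
  have hF : Tendsto (fun n => f (xs n)) atTop (nhds t) := by
    have h1 : Tendsto (fun n => f (xs (n + 1))) atTop (nhds t) :=
      hT.congr fun n => (hstep n).symm
    exact (tendsto_add_atTop_iff_nat 1).mp h1
  rcases hyp with ⟨hcomp, hTf⟩ | ⟨hcomp, hrec⟩
  · have hcd := hcomp xs t hF hT
    rcases hTf with hcT | hcf
    · -- T continuous
      have hTT : Tendsto (fun n => T (T (xs n))) atTop (nhds (T t)) :=
        (hcT.tendsto t).comp hT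
      have hTF : Tendsto (fun n => T (f (xs n))) atTop (nhds (T t)) :=
        (hcT.tendsto t).comp hF
      have hfT : Tendsto (fun n => f (T (xs n))) atTop (nhds (T t)) :=
        approx_tendsto hTF (hcd.congr fun n => dist_comm _ _)
      have key1 := key_limit hcontr hTT hfT hT hF
      have htt : T t = t := fixA hr0 hr1 key1
      obtain ⟨u, hu⟩ := hsub (Set.mem_range_self t)
      rw [htt] at hu
      have key2 := key_limit hcontr hTT hfT
        (tendsto_const_nhds (x := T u)) (tendsto_const_nhds (x := f u))
      rw [htt, hu] at key2
      have hTu : t = T u := fixB hr0 hr1 key2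
      have hconst1 : Tendsto (fun _ : ℕ => f u) atTop (nhds t) := by
        rw [hu]; exact tendsto_const_nhds
      have hconst2 : Tendsto (fun _ : ℕ => T u) atTop (nhds t) := by
        rw [← hTu]; exact tendsto_const_nhds
      have hcd2 := hcomp (fun _ => u) t hconst1 hconst2
      have hftu : f (T u) = T (f u) :=
        dist_eq_zero.mp (tendsto_nhds_unique tendsto_const_nhds hcd2)
      rw [hu, ← hTu] at hftu
      have key3 := hcontr t u
      rw [hftu, hu, ← hTu] at key3
      have h4 : T t = t := fixA hr0 hr1 key3
      exact ⟨t, h4, by rw [hftu, h4]⟩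
    · -- f continuous
      have hff : Tendsto (fun n => f (f (xs n))) atTop (nhds (f t)) :=
        (hcf.tendsto t).comp hF
      have hfT : Tendsto (fun n => f (T (xs n))) atTop (nhds (f t)) :=
        (hcf.tendsto t).comp hT
      have hTf2 : Tendsto (fun n => T (f (xs n))) atTop (nhds (f t)) :=
        approx_tendsto hfT hcd
      have key1 := key_limit hcontr hTf2 hff hT hF
      have hft : f t = t := fixA hr0 hr1 key1
      have key2 := key_limit hcontr hTf2 hff
        (tendsto_const_nhds (x := T t)) (tendsto_const_nhds (x := f t))
      rw [hft] at key2
      have hTt : t = T t := fixB hr0 hr1 key2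
      exact ⟨t, hTt.symm, hft⟩
  · -- reciprocally continuous
    have hcd := hcomp xs t hF hT
    obtain ⟨h1, h2⟩ := hrec xs t hF hT
    have hft : f t = T t := dist_eq_zero.mp (tendsto_nhds_unique (h1.dist h2) hcd)
    have key := key_limit hcontr hT hF
      (tendsto_const_nhds (x := T t)) (tendsto_const_nhds (x := f t))
    rw [hft] at key
    have htt : t = T t := fixA hr0 hr1 key
    exact ⟨t, htt.symm, by rw [hft, ← htt]⟩
end

section
/- Let K be a nonempty subset of a metric space (X,d), let f and T be self-maps of K with T(K) ⊆ f(K). Suppose f and T are weakly compatible, there exists β ∈ [0,1) such that d(Tx,Ty) ≤ β·d(fx,fy) for all x, y ∈ K, and T(K) is a complete metric subspace. Then F(T) ∩ F(f) is a singleton. -/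
/-- Al-Thagafi and Shahzad, Theorem 2.1: for self-maps `f`, `T` of a subset `K` of a
metric space with `T(K) ⊆ f(K)`, `f` and `T` weakly compatible, `T` an `f`-contraction,
and `T(K)` complete, `F(T) ∩ F(f)` is a singleton. -/
theorem al_thagafi_shahzad
    {X : Type*} [MetricSpace X] (K : Set X) (hK : K.Nonempty)
    (T f : X → X)
    (hT : Set.MapsTo T K K) (hf : Set.MapsTo f K K)
    (hsub : T '' K ⊆ f '' K)
    (hwc : ∀ x ∈ K, T x = f x → T (f x) = f (T x))
    (β : ℝ) (hβ0 : 0 ≤ β) (hβ1 : β < 1)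
    (hcontr : ∀ x ∈ K, ∀ y ∈ K, dist (T x) (T y) ≤ β * dist (f x) (f y))
    (hcomplete : IsComplete (T '' K)) :
    ∃! z, z ∈ K ∧ T z = z ∧ f z = z := by
  classical
  -- step function: pick a preimage under f of T a
  have exists_next : ∀ a : X, ∃ b : X, a ∈ K → (b ∈ K ∧ f b = T a) := by
    intro a
    by_cases ha : a ∈ K
    · obtain ⟨b, hb, hfb⟩ := hsub ⟨a, ha, rfl⟩
      exact ⟨b, fun _ => ⟨hb, hfb⟩⟩
    · exact ⟨hK.some, fun h => absurd h ha⟩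
  set next : X → X := fun a => Classical.choose (exists_next a) with hnext_def
  have hnext : ∀ a ∈ K, next a ∈ K ∧ f (next a) = T a :=
    fun a ha => Classical.choose_spec (exists_next a) ha
  set x : ℕ → X := fun n => next^[n] hK.some with hx_def
  have hx0 : x 0 ∈ K := hK.some_mem
  have hxsucc : ∀ n, x (n + 1) = next (x n) := by
    intro n
    simp only [hx_def, Function.iterate_succ_apply']
  have hxK : ∀ n, x n ∈ K := by
    intro n
    induction n with
    | zero => exact hx0
    | succ n ih => rw [hxsucc]; exact (hnext _ ih).1
  have hfx : ∀ n, f (x (n + 1)) = T (x n) := by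
    intro n
    rw [hxsucc]; exact (hnext _ (hxK n)).2
  set y : ℕ → X := fun n => T (x n) with hy_def
  have hyK : ∀ n, y n ∈ T '' K := fun n => ⟨x n, hxK n, rfl⟩
  -- geometric decay of consecutive distances
  have hgeom : ∀ n, dist (y n) (y (n + 1)) ≤ dist (y 0) (y 1) * β ^ n := by
    intro n
    induction n with
    | zero => simp
    | succ n ih =>
      have h1 : dist (y (n + 1)) (y (n + 2)) ≤ β * dist (y n) (y (n + 1)) := by
        have := hcontr (x (n + 1)) (hxK _) (x (n + 2)) (hxK _)
        rwa [hfx, hfx] at this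
      calc dist (y (n + 1)) (y (n + 2)) ≤ β * dist (y n) (y (n + 1)) := h1
        _ ≤ β * (dist (y 0) (y 1) * β ^ n) := by
            exact mul_le_mul_of_nonneg_left ih hβ0
        _ = dist (y 0) (y 1) * β ^ (n + 1) := by ring
  have hcauchy : CauchySeq y := cauchySeq_of_le_geometric β _ hβ1 hgeom
  obtain ⟨w, hwTK, hwlim⟩ := cauchySeq_tendsto_of_isComplete hcomplete hyK hcauchy
  -- w = f u for some u ∈ K
  obtain ⟨u, huK, hfu⟩ := hsub hwTK
  -- show T u = w
  have hTu : T u = w := by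
    have htend : Filter.Tendsto (fun n => y (n + 1)) Filter.atTop (nhds (T u)) := by
      have hdist : Filter.Tendsto (fun n => dist (y (n + 1)) (T u)) Filter.atTop (nhds 0) := by
        have hbound : ∀ n, dist (y (n + 1)) (T u) ≤ β * dist w (y n) := by
          intro n
          have := hcontr (x (n + 1)) (hxK _) u huK
          rw [hfx, hfu] at this
          calc dist (y (n + 1)) (T u) ≤ β * dist (T (x n)) w := this
            _ = β * dist w (y n) := by rw [dist_comm]
        have h0 : Filter.Tendsto (fun n => β * dist w (y n)) Filter.atTop (nhds 0) := by
          have := (tendsto_const_nhds.dist hwlim : Filter.Tendsto (fun n => dist w (y n))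
            Filter.atTop (nhds (dist w w)))
          simpa using this.const_mul β
        exact squeeze_zero (fun n => dist_nonneg) hbound h0
      exact tendsto_iff_dist_tendsto_zero.2 hdist
    have hwlim' : Filter.Tendsto (fun n => y (n + 1)) Filter.atTop (nhds w) :=
      hwlim.comp (Filter.tendsto_add_atTop_nat 1)
    exact tendsto_nhds_unique htend hwlim'
  -- w is a coincidence value: T u = f u = w
  have hcoinc : T u = f u := by rw [hTu, hfu]
  have hwK : w ∈ K := hTu ▸ hT huK
  -- weak compatibility gives T w = f w
  have hTfw : T w = f w := by
    have := hwc u huK hcoinc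
    rw [hfu] at this
    rw [this, hTu]
  -- T w = w
  have hTw : T w = w := by
    have h := hcontr w hwK u huK
    rw [← hTfw, hfu, hTu] at h
    have : dist (T w) w ≤ β * dist (T w) w := h
    have hd : dist (T w) w ≤ 0 := by nlinarith [dist_nonneg (x := T w) (y := w)]
    have := le_antisymm hd dist_nonneg
    exact dist_eq_zero.mp this
  have hfw : f w = w := by rw [← hTfw, hTw]
  refine ⟨w, ⟨hwK, hTw, hfw⟩, ?_⟩
  rintro z ⟨hzK, hTz, hfz⟩
  have h := hcontr z hzK w hwK
  rw [hTz, hTw, hfz, hfw] at h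
  have : dist z w ≤ 0 := by nlinarith [dist_nonneg (x := z) (y := w)]
  exact dist_eq_zero.mp (le_antisymm this dist_nonneg)
end
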